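/- For every ς > −53/3 and every t ∈ ℝ, P^d(ς) ≤ g(t), where P^d(ς) = (1/12)(−ς²−18ς−81) − ((8ς/3)+56)²/(4(ς+53/3)) − 2ς and g(t) = 30+t²(18−16t+3t²) (weak duality between the primal g and its canonical dual). -/
import Mathlib

noncomputable def PdGP (ς : ℝ) : ℝ :=
  (1/12) * (-ς^2 - 18*ς - 81) - ((8*ς/3) + 56)^2 / (4 * (ς + 53/3)) - 2*ς

noncomputable def gGP (t : ℝ) : ℝ := 30 + t^2 * (18 - 16*t + 3*t^2)

theorem stmt_13 : ∀ ς t : ℝ, ς > -53/3 → PdGP ς ≤ gGP t := by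
  intro ς t hς
  have hs : (0:ℝ) < 4 * (ς + 53/3) := by linarith
  have h1 : PdGP ς ≤ 3 := by
    unfold PdGP
    have h : (1/12) * (-ς^2 - 18*ς - 81) - 2*ς - 3 ≤ ((8*ς/3) + 56)^2 / (4 * (ς + 53/3)) := by
      rw [le_div_iff₀ hs]
      nlinarith [sq_nonneg (ς + 15), hς]
    linarith
  have h2 : (3:ℝ) ≤ gGP t := by
    unfold gGP
    nlinarith [sq_nonneg (t - 3), sq_nonneg (t + 1), mul_nonneg (sq_nonneg (t-3)) (sq_nonneg t)]
  linarith
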